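/- arXiv:1204.1545 — 2 statements merged into one kernel-verified Lean document; each statement's English description precedes it below -/
import Mathlib

section
/- For the octonion algebra 𝕆 over ℝ with standard basis e_0 = 1, e_1, ..., e_7, the conjugate of any octonion z satisfies z* = -(1/6) Σ_{p=0}^{7} (e_p z) e_p. -/
/-- The octonions, constructed by the Cayley–Dickson doubling of the quaternions. -/
def Octonion : Type := Quaternion ℝ × Quaternion ℝ

noncomputable instance : AddCommGroup Octonion :=
  inferInstanceAs (AddCommGroup (Quaternion ℝ × Quaternion ℝ))
noncomputable instance : Module ℝ Octonion :=
  inferInstanceAs (Module ℝ (Quaternion ℝ × Quaternion ℝ))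

/-- Cayley–Dickson multiplication: (a,b)(c,d) = (ac - d*b, da + bc*). -/
noncomputable instance : Mul Octonion :=
  ⟨fun x y => (x.1 * y.1 - star y.2 * x.2, y.2 * x.1 + x.2 * star y.1)⟩

/-- Octonion conjugation: (a,b)* = (a*, -b). -/
noncomputable def oconj (x : Octonion) : Octonion := (star x.1, -x.2)

/-- The standard basis e₀ = 1, e₁, ..., e₇ of the octonions. -/
noncomputable def e : Fin 8 → Octonion
  | 0 => ((⟨1,0,0,0⟩ : Quaternion ℝ), 0)
  | 1 => ((⟨0,1,0,0⟩ : Quaternion ℝ), 0)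
  | 2 => ((⟨0,0,1,0⟩ : Quaternion ℝ), 0)
  | 3 => ((⟨0,0,0,1⟩ : Quaternion ℝ), 0)
  | 4 => (0, (⟨1,0,0,0⟩ : Quaternion ℝ))
  | 5 => (0, (⟨0,1,0,0⟩ : Quaternion ℝ))
  | 6 => (0, (⟨0,0,1,0⟩ : Quaternion ℝ))
  | 7 => (0, (⟨0,0,0,1⟩ : Quaternion ℝ))

lemma omul_def (x y : Octonion) :
    x * y = (x.1 * y.1 - star y.2 * x.2, y.2 * x.1 + x.2 * star y.1) := rfl

set_option maxHeartbeats 1600000 in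
theorem octonion_conj_formula (z : Octonion) :
    oconj z = -((1 : ℝ) / 6) • (∑ p : Fin 8, (e p * z) * e p) := by
  have hadd : ∀ x y : Octonion, x + y = (x.1 + y.1, x.2 + y.2) := fun _ _ => rfl
  have hsmul : ∀ (r : ℝ) (x : Octonion), r • x = (r • x.1, r • x.2) := fun _ _ => rfl
  have hm1 : ∀ x y : Octonion, (x * y).1 = x.1 * y.1 - star y.2 * x.2 := fun _ _ => rfl
  have hm2 : ∀ x y : Octonion, (x * y).2 = y.2 * x.1 + x.2 * star y.1 := fun _ _ => rfl
  have ha1 : ∀ x y : Octonion, (x + y).1 = x.1 + y.1 := fun _ _ => rfl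
  have ha2 : ∀ x y : Octonion, (x + y).2 = x.2 + y.2 := fun _ _ => rfl
  have hs1 : ∀ (r : ℝ) (x : Octonion), (r • x).1 = r • x.1 := fun _ _ => rfl
  have hs2 : ∀ (r : ℝ) (x : Octonion), (r • x).2 = r • x.2 := fun _ _ => rfl
  rw [Fin.sum_univ_eight]
  refine Prod.ext ?_ ?_ <;>
    simp only [oconj, hm1, hm2, ha1, ha2, hs1, hs2] <;>
    simp [Quaternion.ext_iff] <;>
    simp [e, Quaternion.re_zero, Quaternion.imI_zero, Quaternion.imJ_zero, Quaternion.imK_zero] <;>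
    and_intros <;> ring
end

section
/- Let M be a compact smooth manifold of dimension d and f : M → ℝ^N a smooth immersion with N > 2d. Then there exists a unit vector v ∈ ℝ^N such that the orthogonal projection onto v^⊥ composed with f is still an immersion M → ℝ^{N-1}. -/
open scoped Manifold RealInnerProductSpace
open Set Module
open scoped ENNReal

/-- Auxiliary lemma: in the chart at `x`, every value of the differential of `f`
at a point `y` of the chart source lies in the image of the "total derivative" map
of the chart representative of `f`. -/
lemma immersion_projection_step_aux {d N : ℕ}
    {M : Type*} [TopologicalSpace M] [ChartedSpace (EuclideanSpace ℝ (Fin d)) M]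
    [IsManifold (𝓡 d) (⊤ : ℕ∞) M]
    (f : M → EuclideanSpace ℝ (Fin N))
    (hf : ContMDiff (𝓡 d) 𝓘(ℝ, EuclideanSpace ℝ (Fin N)) (⊤ : ℕ∞) f)
    (x y : M) (hy : y ∈ (chartAt (EuclideanSpace ℝ (Fin d)) x).source)
    (u : EuclideanSpace ℝ (Fin d)) :
    mfderiv (𝓡 d) 𝓘(ℝ, EuclideanSpace ℝ (Fin N)) f y u ∈
      (fun p : (EuclideanSpace ℝ (Fin d)) × (EuclideanSpace ℝ (Fin d)) =>
        fderiv ℝ (f ∘ (extChartAt (𝓡 d) x).symm) p.1 p.2) ''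
        ((extChartAt (𝓡 d) x).target ×ˢ Set.univ) := by
  set e := extChartAt (𝓡 d) x with he
  set g : EuclideanSpace ℝ (Fin d) → EuclideanSpace ℝ (Fin N) := f ∘ e.symm with hg
  have hy' : y ∈ e.source := by rwa [he, extChartAt_source]
  have hey : e y ∈ e.target := e.map_source hy'
  have hgc : ContMDiffOn 𝓘(ℝ, EuclideanSpace ℝ (Fin d)) 𝓘(ℝ, EuclideanSpace ℝ (Fin N)) (⊤ : ℕ∞)
      g e.target := hf.comp_contMDiffOn (contMDiffOn_extChartAt_symm x)
  have hgd := contMDiffOn_iff_contDiffOn.1 hgc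
  have hopen : IsOpen e.target := isOpen_extChartAt_target x
  have hdg : DifferentiableAt ℝ g (e y) :=
    (hgd.differentiableOn (by simp)).differentiableAt
      (hopen.mem_nhds hey)
  have heq : f =ᶠ[nhds y] g ∘ e := by
    filter_upwards [extChartAt_source_mem_nhds' hy'] with z hz
    simp only [hg, Function.comp_apply]
    rw [e.left_inv hz]
  have h1 : mfderiv (𝓡 d) 𝓘(ℝ, EuclideanSpace ℝ (Fin N)) f y =
      (mfderiv 𝓘(ℝ, EuclideanSpace ℝ (Fin d)) 𝓘(ℝ, EuclideanSpace ℝ (Fin N)) g (e y)).comp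
        (mfderiv (𝓡 d) 𝓘(ℝ, EuclideanSpace ℝ (Fin d)) e y) := by
    rw [heq.mfderiv_eq]
    exact mfderiv_comp y hdg.mdifferentiableAt (mdifferentiableAt_extChartAt hy)
  refine ⟨(e y, mfderiv (𝓡 d) 𝓘(ℝ, EuclideanSpace ℝ (Fin d)) e y u), ⟨hey, trivial⟩, ?_⟩
  rw [h1]
  simp only [mfderiv_eq_fderiv]
  rfl

/-- Projection step for immersions: a compact d-manifold smoothly immersed in
ℝᴺ with N > 2d can be projected along some unit direction v, the orthogonal
projection x ↦ x - ⟪v,x⟫v onto v^⊥ remaining an immersion. -/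
theorem immersion_projection_step
    {d N : ℕ} (hN : 2 * d < N)
    {M : Type*} [TopologicalSpace M] [ChartedSpace (EuclideanSpace ℝ (Fin d)) M]
    [IsManifold (𝓡 d) (⊤ : ℕ∞) M] [CompactSpace M]
    (f : M → EuclideanSpace ℝ (Fin N))
    (hf : ContMDiff (𝓡 d) 𝓘(ℝ, EuclideanSpace ℝ (Fin N)) (⊤ : ℕ∞) f)
    (himm : ∀ x : M, Function.Injective
      (mfderiv (𝓡 d) 𝓘(ℝ, EuclideanSpace ℝ (Fin N)) f x)) :
    ∃ v : EuclideanSpace ℝ (Fin N), ‖v‖ = 1 ∧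
      (ContMDiff (𝓡 d) 𝓘(ℝ, EuclideanSpace ℝ (Fin N)) (⊤ : ℕ∞)
        (fun x => f x - ⟪v, f x⟫ • v)) ∧
      (∀ x : M, Function.Injective
        (mfderiv (𝓡 d) 𝓘(ℝ, EuclideanSpace ℝ (Fin N))
          (fun x => f x - ⟪v, f x⟫ • v) x)) := by
  classical
  have hN0 : 0 < N := lt_of_le_of_lt (Nat.zero_le _) hN
  cases isEmpty_or_nonempty M with
  | inl h =>
    refine ⟨EuclideanSpace.single ⟨0, hN0⟩ 1, by simp [EuclideanSpace.norm_single], ?_, ?_⟩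
    · intro x; exact (h.false x).elim
    · intro x; exact (h.false x).elim
  | inr hNe =>
    -- finite cover by chart sources
    obtain ⟨T, hT⟩ := IsCompact.elim_finite_subcover (isCompact_univ (X := M))
      (fun x : M => (chartAt (EuclideanSpace ℝ (Fin d)) x).source)
      (fun x => (chartAt (EuclideanSpace ℝ (Fin d)) x).open_source)
      (fun y _ => mem_iUnion.2 ⟨y, mem_chart_source _ y⟩)
    set B : Set (EuclideanSpace ℝ (Fin N)) :=
      ⋃ x ∈ (T : Set M),
        (fun p : (EuclideanSpace ℝ (Fin d)) × (EuclideanSpace ℝ (Fin d)) =>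
          fderiv ℝ (f ∘ (extChartAt (𝓡 d) x).symm) p.1 p.2) ''
          ((extChartAt (𝓡 d) x).target ×ˢ Set.univ) with hB
    have hmem : ∀ (y : M) (u : EuclideanSpace ℝ (Fin d)),
        mfderiv (𝓡 d) 𝓘(ℝ, EuclideanSpace ℝ (Fin N)) f y u ∈ B := by
      intro y u
      obtain ⟨x, hxT, hy⟩ := mem_iUnion₂.1 (hT (mem_univ y))
      exact Set.mem_biUnion (Finset.mem_coe.2 hxT)
        (immersion_projection_step_aux f hf x y hy u)
    have hdim : dimH B ≤ (2 * d : ℕ) := by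
      rw [hB, dimH_bUnion T.countable_toSet]
      refine iSup₂_le fun x hx => ?_
      set e := extChartAt (𝓡 d) x with he
      set g : EuclideanSpace ℝ (Fin d) → EuclideanSpace ℝ (Fin N) := f ∘ e.symm with hg
      have hgc : ContMDiffOn 𝓘(ℝ, EuclideanSpace ℝ (Fin d)) 𝓘(ℝ, EuclideanSpace ℝ (Fin N)) (⊤ : ℕ∞)
          g e.target := hf.comp_contMDiffOn (contMDiffOn_extChartAt_symm x)
      have hgd := contMDiffOn_iff_contDiffOn.1 hgc
      have hopen : IsOpen e.target := isOpen_extChartAt_target x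
      have hfd : ContDiffOn ℝ 1 (fun p => fderiv ℝ g p) e.target :=
        hgd.fderiv_of_isOpen hopen (by exact WithTop.coe_le_coe.2 le_top)
      have h1 : ContDiffOn ℝ 1
          (fun p : (EuclideanSpace ℝ (Fin d)) × (EuclideanSpace ℝ (Fin d)) =>
            fderiv ℝ g p.1 p.2) (e.target ×ˢ Set.univ) := by
        have hinner : ContDiffOn ℝ 1
            (fun p : (EuclideanSpace ℝ (Fin d)) × (EuclideanSpace ℝ (Fin d)) =>
              (fderiv ℝ g p.1, p.2)) (e.target ×ˢ Set.univ) :=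
          (hfd.comp contDiff_fst.contDiffOn fun p hp => hp.1).prodMk contDiff_snd.contDiffOn
        exact (isBoundedBilinearMap_apply.contDiff.of_le le_top).comp_contDiffOn hinner
      have h2 : dimH ((fun p : (EuclideanSpace ℝ (Fin d)) × (EuclideanSpace ℝ (Fin d)) =>
          fderiv ℝ g p.1 p.2) ''
            (e.target ×ˢ (Set.univ : Set (EuclideanSpace ℝ (Fin d)))))
          ≤ dimH (e.target ×ˢ (Set.univ : Set (EuclideanSpace ℝ (Fin d)))) := by
        refine dimH_image_le_of_locally_lipschitzOn fun p hp => ?_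
        obtain ⟨K, t, ht, hl⟩ :=
          (h1.contDiffAt ((hopen.prod isOpen_univ).mem_nhds hp)).exists_lipschitzOnWith
        exact ⟨K, t, nhdsWithin_le_nhds ht, hl⟩
      refine h2.trans ?_
      calc dimH (e.target ×ˢ (Set.univ : Set (EuclideanSpace ℝ (Fin d))))
          ≤ dimH (Set.univ :
              Set ((EuclideanSpace ℝ (Fin d)) × (EuclideanSpace ℝ (Fin d)))) :=
            dimH_mono (subset_univ _)
        _ = (finrank ℝ ((EuclideanSpace ℝ (Fin d)) × (EuclideanSpace ℝ (Fin d))) : ℝ≥0∞) :=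
            Real.dimH_univ_eq_finrank _
        _ = ((2 * d : ℕ) : ℝ≥0∞) := by
            rw [Module.finrank_prod, finrank_euclideanSpace_fin]
            norm_num [two_mul]
    have hBne : B ≠ Set.univ := by
      intro hBu
      have h1 : ((N : ℕ) : ℝ≥0∞) ≤ ((2 * d : ℕ) : ℝ≥0∞) := by
        calc ((N : ℕ) : ℝ≥0∞) = dimH (Set.univ : Set (EuclideanSpace ℝ (Fin N))) := by
              rw [Real.dimH_univ_eq_finrank, finrank_euclideanSpace_fin]
          _ = dimH B := by rw [hBu]
          _ ≤ _ := hdim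
      exact absurd (Nat.cast_le.1 h1) (not_le.2 hN)
    obtain ⟨w, hw⟩ := (Set.ne_univ_iff_exists_notMem B).1 hBne
    have hw0 : w ≠ 0 := by
      rintro rfl
      have h0 : (0 : EuclideanSpace ℝ (Fin N)) ∈ B := by
        have := hmem (Classical.arbitrary M) 0
        exact Set.mem_of_eq_of_mem (map_zero (mfderiv (𝓡 d) 𝓘(ℝ, EuclideanSpace ℝ (Fin N)) f (Classical.arbitrary M))).symm this
      exact hw h0
    have hnw : ‖w‖ ≠ 0 := norm_ne_zero_iff.2 hw0
    set v : EuclideanSpace ℝ (Fin N) := ‖w‖⁻¹ • w with hv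
    have hv1 : ‖v‖ = 1 := by
      rw [hv, norm_smul, norm_inv, norm_norm, inv_mul_cancel₀ hnw]
    have hwv : ‖w‖ • v = w := by
      rw [hv, smul_smul, mul_inv_cancel₀ hnw, one_smul]
    have hkey : ∀ (y : M) (u : EuclideanSpace ℝ (Fin d)) (c : ℝ),
        mfderiv (𝓡 d) 𝓘(ℝ, EuclideanSpace ℝ (Fin N)) f y u = c • v → c = 0 := by
      intro y u c h
      by_contra hc
      apply hw
      have := hmem y ((‖w‖ * c⁻¹) • u)
      have e : ((mfderiv (𝓡 d) 𝓘(ℝ, EuclideanSpace ℝ (Fin N)) f y) ((‖w‖ * c⁻¹) • u) : EuclideanSpace ℝ (Fin N)) = w := by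
        calc _ = (‖w‖ * c⁻¹) • (c • v) := by rw [← h]; exact map_smul _ _ _
          _ = w := by rw [smul_smul, mul_assoc, inv_mul_cancel₀ hc, mul_one, hwv]
      exact Set.mem_of_eq_of_mem e.symm this
    set L : EuclideanSpace ℝ (Fin N) →L[ℝ] EuclideanSpace ℝ (Fin N) :=
      ContinuousLinearMap.id ℝ (EuclideanSpace ℝ (Fin N)) -
        (innerSL ℝ v).smulRight v with hL
    have hLapp : ∀ z : EuclideanSpace ℝ (Fin N), L z = z - ⟪v, z⟫ • v := by
      intro z
      simp [hL]
    have hfun : (fun x => f x - ⟪v, f x⟫ • v) = L ∘ f := by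
      funext z
      rw [Function.comp_apply, hLapp]
    refine ⟨v, hv1, ?_, ?_⟩
    · rw [hfun]
      exact (contMDiff_iff_contDiff.2 L.contDiff).comp hf
    · intro x0
      rw [hfun]
      have hD : HasMFDerivAt (𝓡 d) 𝓘(ℝ, EuclideanSpace ℝ (Fin N)) (L ∘ f) x0
          (L.comp (mfderiv (𝓡 d) 𝓘(ℝ, EuclideanSpace ℝ (Fin N)) f x0)) :=
        L.hasMFDerivAt.comp x0 ((hf x0).mdifferentiableAt (by simp)).hasMFDerivAt
      rw [hD.mfderiv]
      intro u u' h
      set D := mfderiv (𝓡 d) 𝓘(ℝ, EuclideanSpace ℝ (Fin N)) f x0 with hD'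
      set ι : TangentSpace 𝓘(ℝ, EuclideanSpace ℝ (Fin N)) (f x0) → EuclideanSpace ℝ (Fin N) :=
        fun z => z with hι
      have h' : ι (D u) - ⟪v, ι (D u)⟫ • v = ι (D u') - ⟪v, ι (D u')⟫ • v := by
        exact (hLapp _).symm.trans (h.trans (hLapp _))
      have h'' : ι (D u) - ι (D u') = (⟪v, ι (D u)⟫ - ⟪v, ι (D u')⟫) • v := by
        rw [sub_smul]
        exact sub_eq_sub_iff_sub_eq_sub.1 h'
      have hmap : ι (D (u - u')) = ι (D u) - ι (D u') := by rw [map_sub]; rfl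
      have hsub : ι (D (u - u')) = ⟪v, ι (D (u - u'))⟫ • v := by
        rw [hmap, inner_sub_right]
        exact h''
      have hc0 : ⟪v, ι (D (u - u'))⟫ = 0 := hkey x0 (u - u') _ hsub
      rw [hc0, zero_smul] at hsub
      have h0 : D (u - u') = D 0 := by rw [map_zero]; exact hsub
      have := himm x0 h0
      exact sub_eq_zero.1 this
end
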